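/- For any two 2×2 positive semidefinite complex matrices ρ_1, ρ_2, there exists a unitary U such that both U ρ_1 U† and U ρ_2 U† have real entries. -/

import Mathlib

open Matrix ComplexOrder

/-- For any two `2 × 2` positive semidefinite complex matrices `ρ₁, ρ₂`, there is a unitary
`U` such that both `U ρ₁ U†` and `U ρ₂ U†` have real entries. -/
theorem stmt_19 (ρ₁ ρ₂ : Matrix (Fin 2) (Fin 2) ℂ)
    (h₁ : ρ₁.PosSemidef) (h₂ : ρ₂.PosSemidef) :
    ∃ U ∈ Matrix.unitaryGroup (Fin 2) ℂ,
      (∀ i j, ((U * ρ₁ * Uᴴ) i j).im = 0) ∧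
      (∀ i j, ((U * ρ₂ * Uᴴ) i j).im = 0) := by
  classical
  have hH₁ := h₁.1
  set V : Matrix (Fin 2) (Fin 2) ℂ := (hH₁.eigenvectorUnitary : Matrix (Fin 2) (Fin 2) ℂ)
  have hVmem : V ∈ Matrix.unitaryGroup (Fin 2) ℂ := hH₁.eigenvectorUnitary.2
  set U₁ : Matrix (Fin 2) (Fin 2) ℂ := star V with hU₁
  have hU₁mem : U₁ ∈ Matrix.unitaryGroup (Fin 2) ℂ := Unitary.star_mem hVmem
  -- U₁ diagonalizes ρ₁
  have hdiag : U₁ * ρ₁ * U₁ᴴ = diagonal (RCLike.ofReal ∘ hH₁.eigenvalues) := by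
    have := hH₁.conjStarAlgAut_star_eigenvectorUnitary
    simpa [hU₁, Matrix.star_eq_conjTranspose] using this
  set M : Matrix (Fin 2) (Fin 2) ℂ := U₁ * ρ₂ * U₁ᴴ with hM
  have hMH : M.IsHermitian := by
    have := h₂.1
    unfold Matrix.IsHermitian at this ⊢
    simp [hM, Matrix.conjTranspose_mul, Matrix.mul_assoc, this]
  set b : ℂ := M 0 1 with hb
  set u : ℂ := if b = 0 then 1 else b / ‖b‖ with hu
  have hunorm : u * (starRingEnd ℂ) u = 1 := by
    rw [hu]
    split_ifs with h
    · simp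
    · have habs : (‖b‖ : ℂ) ≠ 0 := by
        simpa using (norm_ne_zero_iff.mpr h)
      field_simp
      rw [map_div₀, Complex.conj_ofReal, mul_div_assoc', Complex.mul_conj, ← Complex.sq_norm]
      push_cast
      rw [div_eq_iff habs]
      ring
  set d : Fin 2 → ℂ := ![1, u] with hd
  set D : Matrix (Fin 2) (Fin 2) ℂ := diagonal d with hD
  have hDmem : D ∈ Matrix.unitaryGroup (Fin 2) ℂ := by
    rw [Matrix.mem_unitaryGroup_iff]
    rw [hD, Matrix.star_eq_conjTranspose, Matrix.diagonal_conjTranspose,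
      Matrix.diagonal_mul_diagonal]
    ext i j
    fin_cases i <;> fin_cases j <;>
      simp [hd, hunorm, Matrix.diagonal_apply, Matrix.one_apply]
  refine ⟨D * U₁, mul_mem hDmem hU₁mem, ?_, ?_⟩
  all_goals
    have key : ∀ (ρ : Matrix (Fin 2) (Fin 2) ℂ),
        (D * U₁) * ρ * (D * U₁)ᴴ = D * (U₁ * ρ * U₁ᴴ) * Dᴴ := by
      intro ρ
      rw [Matrix.conjTranspose_mul]
      noncomm_ring
  · -- ρ₁ part
    intro i j
    rw [key, hdiag]
    rw [hD, Matrix.diagonal_conjTranspose]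
    rw [Matrix.mul_diagonal, Matrix.diagonal_mul]
    by_cases hij : i = j
    · subst hij
      have : d i * (diagonal (RCLike.ofReal ∘ hH₁.eigenvalues)) i i * (star d) i
          = (hH₁.eigenvalues i : ℂ) * (d i * star (d i)) := by
        simp [Matrix.diagonal_apply_eq]; ring
      rw [this]
      fin_cases i <;> simp [hd, hunorm]
    · simp [Matrix.diagonal_apply_ne _ hij]
  · -- ρ₂ part
    intro i j
    rw [key, ← hM]
    rw [hD, Matrix.diagonal_conjTranspose, Matrix.mul_diagonal, Matrix.diagonal_mul]
    have hM10 : M 1 0 = (starRingEnd ℂ) b := by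
      rw [hb]; exact (hMH.apply 1 0).symm ▸ rfl
    have hdiagre : ∀ i : Fin 2, (M i i).im = 0 := by
      intro i
      have := hMH.apply i i
      have h2 : (starRingEnd ℂ) (M i i) = M i i := this
      exact Complex.conj_eq_iff_im.mp h2
    fin_cases i <;> fin_cases j
    · simpa [hd] using hdiagre 0
    · -- entry (0,1): 1 * b * conj u
      show (d 0 * M 0 1 * star (d 1)).im = 0
      simp only [hd, Matrix.cons_val_zero, Matrix.cons_val_one, Matrix.head_cons, one_mul, ← hb]
      rw [hu]
      split_ifs with h
      · simp [h]
      · have habs : (‖b‖ : ℂ) ≠ 0 := by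
          simpa using (norm_ne_zero_iff.mpr h)
        have : b * (starRingEnd ℂ) (b / (‖b‖ : ℂ))
            = ((Complex.normSq b / ‖b‖ : ℝ) : ℂ) := by
          rw [map_div₀, Complex.conj_ofReal, mul_div_assoc', Complex.mul_conj]
          push_cast
          ring
        show (b * star (b / (‖b‖ : ℂ))).im = 0
        rw [show (star (b / (‖b‖ : ℂ))) = (starRingEnd ℂ) (b / (‖b‖ : ℂ)) from rfl]
        rw [this, Complex.ofReal_im]
    · -- entry (1,0): u * conj b * 1
      show (d 1 * M 1 0 * star (d 0)).im = 0
      simp only [hd, Matrix.cons_val_zero, Matrix.cons_val_one, Matrix.head_cons, star_one, mul_one]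
      rw [hM10, hu]
      split_ifs with h
      · simp [h]
      · have habs : (‖b‖ : ℂ) ≠ 0 := by
          simpa using (norm_ne_zero_iff.mpr h)
        have : b / (‖b‖ : ℂ) * (starRingEnd ℂ) b
            = ((Complex.normSq b / ‖b‖ : ℝ) : ℂ) := by
          rw [div_mul_eq_mul_div, Complex.mul_conj]
          push_cast
          ring
        rw [this, Complex.ofReal_im]
    · -- entry (1,1): u * M 1 1 * conj u
      show (d 1 * M 1 1 * star (d 1)).im = 0
      have : d 1 * M 1 1 * star (d 1) = M 1 1 * (d 1 * star (d 1)) := by ring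
      rw [this]
      simp only [hd, Matrix.cons_val_one, Matrix.head_cons, Matrix.cons_val_zero]
      rw [show (star u) = (starRingEnd ℂ) u from rfl, hunorm, mul_one]
      exact hdiagre 1
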